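/- Let D₁, ..., Dₘ be n×n diagonal matrices with positive diagonal entries such that D₁D₂⋯Dₘ = I. Then for every n×n complex matrix A, ‖A‖^m ≤ ‖D₁A‖·‖D₂A‖ ⋯ ‖DₘA‖, where ‖·‖ denotes the spectral (operator) norm on ℂⁿ with the Euclidean norm. -/

import Mathlib

open scoped Matrix

/-- The spectral (operator) norm of an `n × n` complex matrix acting on `ℂⁿ` with
the Euclidean norm. -/
noncomputable def matOpNorm {n : ℕ} (M : Matrix (Fin n) (Fin n) ℂ) : ℝ :=
  ‖Matrix.toEuclideanCLM (𝕜 := ℂ) M‖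

/-- Generalized Hölder inequality for `m` nonnegative functions on `Fin n`. -/
lemma holder_prod {m n : ℕ} (hm : m ≠ 0) (f : Fin m → Fin n → ℝ)
    (hf : ∀ i j, 0 ≤ f i j) :
    (∑ j, (∏ i, f i j) ^ ((m : ℝ)⁻¹)) ^ m ≤ ∏ i, ∑ j, f i j := by
  have hmR : ((m : ℝ))⁻¹ ≠ 0 := inv_ne_zero (Nat.cast_ne_zero.mpr hm)
  by_cases h0 : ∃ i, ∑ j, f i j = 0
  · obtain ⟨i, hi⟩ := h0
    have hfi : ∀ j, f i j = 0 := fun j =>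
      (Finset.sum_eq_zero_iff_of_nonneg (fun j _ => hf i j)).mp hi j (Finset.mem_univ j)
    have hz : ∀ j : Fin n, (∏ i, f i j) ^ ((m : ℝ)⁻¹) = 0 := by
      intro j
      rw [Finset.prod_eq_zero (Finset.mem_univ i) (hfi j), Real.zero_rpow hmR]
    rw [Finset.sum_congr rfl fun j _ => hz j]
    simp only [Finset.sum_const, smul_zero, zero_pow hm]
    exact Finset.prod_nonneg fun i _ => Finset.sum_nonneg fun j _ => hf i j
  · push_neg at h0
    have hS : ∀ i, 0 < ∑ j, f i j := fun i =>
      (Finset.sum_nonneg fun j _ => hf i j).lt_of_ne (Ne.symm (h0 i))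
    have hP : 0 < ∏ i, ∑ j, f i j := Finset.prod_pos fun i _ => hS i
    have key : ∑ j, (∏ i, f i j) ^ ((m : ℝ)⁻¹) ≤ (∏ i, ∑ j, f i j) ^ ((m : ℝ)⁻¹) := by
      have step : ∀ j : Fin n, (∏ i, f i j) ^ ((m : ℝ)⁻¹)
          ≤ (∏ i, ∑ k, f i k) ^ ((m : ℝ)⁻¹) * ∑ i, (m : ℝ)⁻¹ * (f i j / ∑ k, f i k) := by
        intro j
        have amgm := Real.geom_mean_le_arith_mean_weighted Finset.univ
          (fun _ : Fin m => (m : ℝ)⁻¹) (fun i => f i j / ∑ k, f i k)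
          (fun i _ => by positivity)
          (by simp [Finset.sum_const, Finset.card_univ]
              field_simp)
          (fun i _ => div_nonneg (hf i j) (hS i).le)
        have lhs_eq : (∏ i, (f i j / ∑ k, f i k) ^ ((m : ℝ)⁻¹))
            = (∏ i, f i j) ^ ((m : ℝ)⁻¹) / (∏ i, ∑ k, f i k) ^ ((m : ℝ)⁻¹) := by
          rw [← Real.finset_prod_rpow _ _ (fun i _ => hf i j) _,
              ← Real.finset_prod_rpow _ _ (fun i _ => (hS i).le) _,
              ← Finset.prod_div_distrib]
          exact Finset.prod_congr rfl fun i _ => (Real.div_rpow (hf i j) (hS i).le _)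
        rw [lhs_eq] at amgm
        have hPr : (0:ℝ) < (∏ i, ∑ k, f i k) ^ ((m : ℝ)⁻¹) := Real.rpow_pos_of_pos hP _
        calc (∏ i, f i j) ^ ((m : ℝ)⁻¹)
            = (∏ i, ∑ k, f i k) ^ ((m : ℝ)⁻¹) *
              ((∏ i, f i j) ^ ((m : ℝ)⁻¹) / (∏ i, ∑ k, f i k) ^ ((m : ℝ)⁻¹)) := by
              field_simp
          _ ≤ _ := by
              exact mul_le_mul_of_nonneg_left amgm hPr.le
      calc ∑ j, (∏ i, f i j) ^ ((m : ℝ)⁻¹)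
          ≤ ∑ j, ((∏ i, ∑ k, f i k) ^ ((m : ℝ)⁻¹) * ∑ i, (m : ℝ)⁻¹ * (f i j / ∑ k, f i k)) :=
            Finset.sum_le_sum fun j _ => step j
        _ = (∏ i, ∑ k, f i k) ^ ((m : ℝ)⁻¹) *
              ∑ i, (m : ℝ)⁻¹ * ((∑ j, f i j) / ∑ k, f i k) := by
            rw [← Finset.mul_sum, Finset.sum_comm]
            congr 1
            refine Finset.sum_congr rfl fun i _ => ?_
            rw [← Finset.mul_sum, ← Finset.sum_div]
        _ = (∏ i, ∑ k, f i k) ^ ((m : ℝ)⁻¹) := by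
            have : ∀ i : Fin m, (m : ℝ)⁻¹ * ((∑ j, f i j) / ∑ k, f i k) = (m : ℝ)⁻¹ := by
              intro i; rw [div_self (hS i).ne', mul_one]
            rw [Finset.sum_congr rfl fun i _ => this i]
            simp [Finset.sum_const, Finset.card_univ]
            field_simp
    calc (∑ j, (∏ i, f i j) ^ ((m : ℝ)⁻¹)) ^ m
        ≤ ((∏ i, ∑ j, f i j) ^ ((m : ℝ)⁻¹)) ^ m := by
          refine pow_le_pow_left₀ ?_ key m
          exact Finset.sum_nonneg fun j _ =>
            Real.rpow_nonneg (Finset.prod_nonneg fun i _ => hf i j) _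
      _ = ∏ i, ∑ j, f i j := Real.rpow_inv_natCast_pow hP.le hm

/-- Finite-dimensional operator norm analogue of Cohen's inequality: if
`D₁, …, Dₘ` are diagonal matrices with positive diagonal entries and
`D₁D₂⋯Dₘ = I`, then `‖A‖^m ≤ ‖D₁A‖ ⋯ ‖DₘA‖`. -/
theorem matOpNorm_pow_le_prod (n m : ℕ) (c : Fin m → Fin n → ℝ)
    (hc : ∀ i j, 0 < c i j) (hprod : ∀ j, ∏ i, c i j = 1)
    (A : Matrix (Fin n) (Fin n) ℂ) :
    matOpNorm A ^ m ≤ ∏ i, matOpNorm (Matrix.diagonal (fun j => (c i j : ℂ)) * A) := by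
  rcases Nat.eq_zero_or_pos m with hm0 | hmpos
  · subst hm0; simp
  have hm : m ≠ 0 := hmpos.ne'
  set T := Matrix.toEuclideanCLM (𝕜 := ℂ) A with hT
  set Ti : Fin m → (EuclideanSpace ℂ (Fin n) →L[ℂ] EuclideanSpace ℂ (Fin n)) :=
    fun i => Matrix.toEuclideanCLM (𝕜 := ℂ) (Matrix.diagonal (fun j => (c i j : ℂ)) * A)
    with hTi
  -- pointwise bound
  have key : ∀ x : EuclideanSpace ℂ (Fin n), ‖T x‖ ^ m ≤ ∏ i, ‖Ti i x‖ := by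
    intro x
    set y := T x with hy
    have hcomp : ∀ i j, (Ti i x) j = (c i j : ℂ) * y j := by
      intro i j
      have h1 : Ti i x = Matrix.toEuclideanCLM (𝕜 := ℂ)
          (Matrix.diagonal (fun j => (c i j : ℂ))) y := by
        rw [hTi]
        simp only [map_mul]
        rfl
      rw [h1]
      have h2 : (Matrix.toEuclideanCLM (𝕜 := ℂ)
          (Matrix.diagonal (fun j => (c i j : ℂ))) y) j
          = ((Matrix.diagonal (fun j => (c i j : ℂ))) *ᵥ (WithLp.equiv _ _ y)) j := by
        rfl
      rw [h2, Matrix.mulVec_diagonal]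
      rfl
    have hnormsq : ∀ i, ‖Ti i x‖ ^ 2 = ∑ j, (c i j) ^ 2 * ‖y j‖ ^ 2 := by
      intro i
      rw [PiLp.norm_sq_eq_of_L2]
      refine Finset.sum_congr rfl fun j _ => ?_
      rw [hcomp i j, norm_mul, mul_pow]
      congr 1
      rw [Complex.norm_real, Real.norm_eq_abs, abs_of_pos (hc i j)]
    have hold := holder_prod hm (fun i j => (c i j) ^ 2 * ‖y j‖ ^ 2)
      (fun i j => by positivity)
    have hprodf : ∀ j : Fin n, (∏ i, (c i j) ^ 2 * ‖y j‖ ^ 2) = (‖y j‖ ^ 2) ^ m := by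
      intro j
      rw [Finset.prod_mul_distrib, Finset.prod_pow, hprod j, one_pow, one_mul,
        Finset.prod_const, Finset.card_univ, Fintype.card_fin]
    have hLHS : ∀ j : Fin n, (∏ i, (c i j) ^ 2 * ‖y j‖ ^ 2) ^ ((m : ℝ)⁻¹) = ‖y j‖ ^ 2 := by
      intro j
      rw [hprodf j, Real.pow_rpow_inv_natCast (sq_nonneg _) hm]
    rw [Finset.sum_congr rfl fun j _ => hLHS j] at hold
    have hnorm_y : ‖y‖ ^ 2 = ∑ j, ‖y j‖ ^ 2 := PiLp.norm_sq_eq_of_L2 _ y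
    rw [← hnorm_y] at hold
    rw [Finset.prod_congr rfl fun i _ => (hnormsq i).symm] at hold
    -- hold : (‖y‖ ^ 2) ^ m ≤ ∏ i, ‖Ti i x‖ ^ 2
    have hsq : (‖y‖ ^ m) ^ 2 ≤ (∏ i, ‖Ti i x‖) ^ 2 := by
      rw [← pow_mul, mul_comm m 2, pow_mul, ← Finset.prod_pow] at *
      exact hold
    have h1 : (0:ℝ) ≤ ‖y‖ ^ m := pow_nonneg (norm_nonneg _) m
    have h2 : (0:ℝ) ≤ ∏ i, ‖Ti i x‖ := Finset.prod_nonneg fun i _ => norm_nonneg _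
    exact (pow_le_pow_iff_left₀ h1 h2 two_ne_zero).mp hsq
  -- operator norm bound
  set P := ∏ i, matOpNorm (Matrix.diagonal (fun j => (c i j : ℂ)) * A) with hPdef
  have hPnn : 0 ≤ P := Finset.prod_nonneg fun i _ => norm_nonneg _
  set C : ℝ := P ^ ((m : ℝ)⁻¹) with hC
  have hCnn : 0 ≤ C := Real.rpow_nonneg hPnn _
  have hCm : C ^ m = P := Real.rpow_inv_natCast_pow hPnn hm
  have hTle : ‖T‖ ≤ C := by
    refine ContinuousLinearMap.opNorm_le_bound _ hCnn fun x => ?_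
    have h1 : ‖T x‖ ^ m ≤ ∏ i, ‖Ti i x‖ := key x
    have h2 : ∏ i, ‖Ti i x‖ ≤ ∏ i, ‖Ti i‖ * ‖x‖ :=
      Finset.prod_le_prod (fun i _ => norm_nonneg _)
        (fun i _ => (Ti i).le_opNorm x)
    have h3 : (∏ i, ‖Ti i‖ * ‖x‖) = (C * ‖x‖) ^ m := by
      rw [Finset.prod_mul_distrib, Finset.prod_const, Finset.card_univ, Fintype.card_fin,
        mul_pow, hCm]
      rfl
    refine (pow_le_pow_iff_left₀ (norm_nonneg _) (by positivity) hm).mp ?_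
    calc ‖T x‖ ^ m ≤ ∏ i, ‖Ti i x‖ := h1
      _ ≤ ∏ i, ‖Ti i‖ * ‖x‖ := h2
      _ = (C * ‖x‖) ^ m := h3
  calc matOpNorm A ^ m = ‖T‖ ^ m := rfl
    _ ≤ C ^ m := pow_le_pow_left₀ (norm_nonneg _) hTle m
    _ = P := hCm
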